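/- Let H be a complex Hilbert space and D a densely defined self-adjoint operator on H. Let n ≥ 1 be a natural number, x a bounded operator on H, and y : ℕ → B(H) a sequence of bounded operators with y 0 = x such that for every k < n: y k maps dom D into dom D, and for every h ∈ dom D, y (k+1) h = i·(D(y k h) − y k (D h)) (so x is n-times weakly D-differentiable with (δ^D_w)^k(x) = y k). If y n = 0, then y 1 = 0. That is, for every n ∈ ℕ, ker (δ^D_w)^n = ker δ^D_w (kernel stabilization). -/

import Mathlib

open Complex Filter Topology

local notation "⟪" x ", " y "⟫" => @inner ℂ _ _ x y

open Finset in
lemma aux_binom_bound (N : ℕ) : ∀ (b : ℕ → ℂ) (C : ℝ),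
    (∀ m : ℕ, ‖∑ k ∈ Finset.range (N + 1), (m.choose k) • b k‖ ≤ C) →
    ∀ k, 1 ≤ k → k ≤ N → b k = 0 := by
  induction N with
  | zero => intro b C _ k hk1 hk0; omega
  | succ N ih =>
    intro b C hb k hk1 hkN
    -- difference sequence
    have hdiff : ∀ m : ℕ, (∑ k ∈ Finset.range (N + 2), ((m+1).choose k) • b k)
        - (∑ k ∈ Finset.range (N + 2), (m.choose k) • b k)
        = ∑ j ∈ Finset.range (N + 1), (m.choose j) • b (j + 1) := by
      intro m
      rw [← Finset.sum_sub_distrib]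
      rw [Finset.sum_range_succ' (fun k => ((m+1).choose k) • b k - (m.choose k) • b k) (N+1)]
      simp only [Nat.choose_succ_succ, Nat.choose_zero_right, add_smul, sub_self, add_zero]
      simp [add_sub_cancel_right]
    have hb' : ∀ m : ℕ, ‖∑ j ∈ Finset.range (N + 1), (m.choose j) • b (j + 1)‖ ≤ C + C := by
      intro m
      rw [← hdiff m]
      exact (norm_sub_le _ _).trans (add_le_add (hb (m+1)) (hb m))
    have h2 : ∀ j, 1 ≤ j → j ≤ N → b (j + 1) = 0 := ih (fun j => b (j+1)) (C + C) hb'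
    -- so b k = 0 for 2 ≤ k ≤ N+1.  Remains k = 1.
    rcases Nat.lt_or_ge 1 k with hk2 | hk2
    · obtain ⟨j, rfl⟩ : ∃ j, k = j + 1 := ⟨k - 1, by omega⟩
      exact h2 j (by omega) (by omega)
    · -- k = 1
      have hk : k = 1 := by omega
      subst hk
      by_contra hb1
      -- sum reduces to b 0 + m • b 1
      have hred : ∀ m : ℕ, ∑ k ∈ Finset.range (N + 2), (m.choose k) • b k = b 0 + (m : ℂ) * b 1 := by
        intro m
        rw [Finset.sum_range_succ']
        simp only [Nat.choose_zero_right, one_smul]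
        have : ∀ i ∈ Finset.range (N+1), (m.choose (i+1)) • b (i+1)
            = if i = 0 then (m : ℂ) * b 1 else 0 := by
          intro i hi
          have hi' := Finset.mem_range.mp hi
          rcases Nat.eq_zero_or_pos i with h0 | hpos
          · subst h0; simp [Nat.choose_one_right, nsmul_eq_mul]
          · rw [if_neg (by omega), h2 i (by omega) (by omega)]
            simp
        rw [Finset.sum_congr rfl this, Finset.sum_ite_eq' (Finset.range (N+1)) 0]
        simp [add_comm]
      obtain ⟨m, hm⟩ := exists_nat_gt ((C + ‖b 0‖) / ‖b 1‖)
      have hC := hb m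
      rw [hred m] at hC
      have h1 : (m : ℝ) * ‖b 1‖ - ‖b 0‖ ≤ C := by
        calc (m : ℝ) * ‖b 1‖ - ‖b 0‖ = ‖(m : ℂ) * b 1‖ - ‖b 0‖ := by
              rw [norm_mul]; simp
          _ ≤ ‖b 0 + (m : ℂ) * b 1‖ := by
              have := norm_add_le (-(b 0)) (b 0 + (m:ℂ) * b 1); simp at this ⊢; linarith [norm_le_insert' (b 0 + (m:ℂ)*b 1) (b 0)]
          _ ≤ C := hC
      have hpos : 0 < ‖b 1‖ := norm_pos_iff.mpr hb1
      rw [div_lt_iff₀ hpos] at hm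
      linarith

lemma aux_resolvent {H : Type*} [NormedAddCommGroup H] [InnerProductSpace ℂ H]
    [CompleteSpace H] (D : H →ₗ.[ℂ] H) (hdense : Dense (D.domain : Set H))
    (hsa : D.adjoint = D) (c : ℂ) (hc1 : (starRingEnd ℂ) c = -c) (hc2 : c ≠ 0)
    (hc3 : ‖c‖ = 1) :
    ∃ R : H →L[ℂ] H,
      (∀ u : H, ∃ a : D.domain, (a : H) = R u ∧ D a + c • (a : H) = u) ∧
      (∀ a : D.domain, R (D a + c • (a : H)) = (a : H)) := by
  -- symmetry
  have hsym : ∀ a b : D.domain, ⟪D a, (b : H)⟫ = ⟪(a : H), D b⟫ := by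
    have h := D.adjoint_isFormalAdjoint hdense
    rw [hsa] at h
    exact h
  -- transporting adjoint facts to D
  have hmem : ∀ v : H, (∃ w : H, ∀ a : D.domain, ⟪w, (a : H)⟫ = ⟪v, D a⟫) →
      v ∈ D.domain := by
    intro v hv
    have := LinearPMap.mem_adjoint_domain_of_exists (T := D) v hv
    rwa [hsa] at this
  have happ : ∀ (v : H) (hv : v ∈ D.domain) (w : H),
      (∀ a : D.domain, ⟪w, (a : H)⟫ = ⟪v, D a⟫) → D ⟨v, hv⟩ = w := by
    intro v hv w hw
    have hv' : v ∈ D.adjoint.domain := by rw [hsa]; exact hv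
    have key : ∀ (hv' : v ∈ D.adjoint.domain) (hv : v ∈ D.domain),
        D.adjoint ⟨v, hv'⟩ = D ⟨v, hv⟩ := by
      rw [hsa]; intro hv' hv; rfl
    rw [← key hv' hv]
    exact LinearPMap.adjoint_apply_eq hdense ⟨v, hv'⟩ hw
  -- the operator T = D + c
  set T : D.domain →ₗ[ℂ] H := D.toFun + c • D.domain.subtype with hT
  have hTapp : ∀ a : D.domain, T a = D a + c • (a : H) := fun a => rfl
  -- inner ⟪D a, a⟫ is real
  have hreal : ∀ a : D.domain, (starRingEnd ℂ) ⟪D a, (a : H)⟫ = ⟪D a, (a : H)⟫ := by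
    intro a
    rw [inner_conj_symm, hsym a a]
  -- norm identity
  have hnorm : ∀ a : D.domain, ‖T a‖ ^ 2 = ‖D a‖ ^ 2 + ‖(a : H)‖ ^ 2 := by
    intro a
    rw [hTapp, @norm_add_sq ℂ]
    have h1 : ⟪D a, c • (a : H)⟫ = c * ⟪D a, (a : H)⟫ := inner_smul_right _ _ _
    have h2 : RCLike.re ⟪D a, c • (a : H)⟫ = 0 := by
      rw [h1]
      obtain ⟨r, hr⟩ := Complex.conj_eq_iff_real.mp (hreal a)
      have hcre : c.re = 0 := by
        have := congrArg Complex.re hc1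
        simp at this
        linarith
      rw [hr]
      simp [Complex.mul_re, hcre]
    rw [h2, norm_smul, hc3]
    ring
  have hnorm1 : ∀ a : D.domain, ‖(a : H)‖ ≤ ‖T a‖ := by
    intro a
    have := hnorm a
    nlinarith [norm_nonneg (T a), norm_nonneg ((a : H)), norm_nonneg (D a), sq_nonneg (‖T a‖ - ‖(a:H)‖)]
  have hnorm2 : ∀ a : D.domain, ‖D a‖ ≤ ‖T a‖ := by
    intro a
    have := hnorm a
    nlinarith [norm_nonneg (T a), norm_nonneg ((a : H)), norm_nonneg (D a)]
  -- injectivity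
  have hinj : Function.Injective T := by
    rw [injective_iff_map_eq_zero]
    intro a ha
    have := hnorm1 a
    rw [ha, norm_zero] at this
    have : (a : H) = 0 := norm_le_zero_iff.mp this
    exact Subtype.ext this
  -- range is closed
  have hclosedrange : IsClosed ((LinearMap.range T : Submodule ℂ H) : Set H) := by
    apply IsSeqClosed.isClosed
    intro f u hf hu
    choose g hg using hf
    -- f j = T (g j)
    have hcauchy : CauchySeq f := hu.cauchySeq
    have hcg : CauchySeq (fun j => ((g j : H))) := by
      rw [Metric.cauchySeq_iff] at hcauchy ⊢
      intro ε hε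
      obtain ⟨N, hN⟩ := hcauchy ε hε
      refine ⟨N, fun i hi j hj => ?_⟩
      have := hN i hi j hj
      rw [dist_eq_norm] at this ⊢
      calc ‖(g i : H) - (g j : H)‖ = ‖((g i - g j : D.domain) : H)‖ := rfl
        _ ≤ ‖T (g i - g j)‖ := hnorm1 _
        _ = ‖f i - f j‖ := by rw [map_sub, hg i, hg j]
        _ < ε := this
    have hcDg : CauchySeq (fun j => D (g j)) := by
      rw [Metric.cauchySeq_iff] at hcauchy ⊢
      intro ε hε
      obtain ⟨N, hN⟩ := hcauchy ε hε
      refine ⟨N, fun i hi j hj => ?_⟩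
      have := hN i hi j hj
      rw [dist_eq_norm] at this ⊢
      calc ‖D (g i) - D (g j)‖ = ‖D (g i - g j)‖ := by rw [D.map_sub]
        _ ≤ ‖T (g i - g j)‖ := hnorm2 _
        _ = ‖f i - f j‖ := by rw [map_sub, hg i, hg j]
        _ < ε := this
    obtain ⟨v, hv⟩ := cauchySeq_tendsto_of_complete hcg
    obtain ⟨w, hw⟩ := cauchySeq_tendsto_of_complete hcDg
    -- closedness of D (via adjoint) : v ∈ domain and D v = w
    have hvw : ∀ a : D.domain, ⟪w, (a : H)⟫ = ⟪v, D a⟫ := by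
      intro a
      have h1 : Tendsto (fun j => ⟪D (g j), (a : H)⟫) atTop (𝓝 ⟪w, (a : H)⟫) :=
        hw.inner tendsto_const_nhds
      have h2 : Tendsto (fun j => ⟪(g j : H), D a⟫) atTop (𝓝 ⟪v, D a⟫) :=
        hv.inner tendsto_const_nhds
      have heq : (fun j => ⟪D (g j), (a : H)⟫) = fun j => ⟪(g j : H), D a⟫ := by
        funext j; exact hsym (g j) a
      rw [heq] at h1
      exact tendsto_nhds_unique h1 h2
    have hvmem : v ∈ D.domain := hmem v ⟨w, hvw⟩
    have hDv : D ⟨v, hvmem⟩ = w := happ v hvmem w hvw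
    refine ⟨⟨v, hvmem⟩, ?_⟩
    rw [hTapp, hDv]
    -- u = w + c • v since f j = D g j + c • g j → both
    have hfl : Tendsto f atTop (𝓝 (w + c • v)) := by
      have : f = fun j => D (g j) + c • ((g j : H)) := by
        funext j; rw [← hg j, hTapp]
      rw [this]
      exact hw.add (hv.const_smul c)
    exact tendsto_nhds_unique hfl hu
  -- orthogonal complement of range is trivial
  have horth : (LinearMap.range T)ᗮ = ⊥ := by
    rw [Submodule.eq_bot_iff]
    intro v hv
    rw [Submodule.mem_orthogonal] at hv
    have hv' : ∀ a : D.domain, ⟪D a + c • (a : H), v⟫ = 0 := by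
      intro a
      exact hv _ ⟨a, rfl⟩
    have hw : ∀ a : D.domain, ⟪-(starRingEnd ℂ) c • v, (a : H)⟫ = ⟪v, D a⟫ := by
      intro a
      have h0 := hv' a
      rw [inner_add_left, inner_smul_left] at h0
      have h1 : ⟪D a, v⟫ = -((starRingEnd ℂ) c * ⟪(a : H), v⟫) := by linear_combination h0
      have h2 : ⟪v, D a⟫ = (starRingEnd ℂ) ⟪D a, v⟫ := (inner_conj_symm _ _).symm
      rw [h2, h1, map_neg, map_mul, inner_conj_symm, Complex.conj_conj,
        inner_smul_left, map_neg, Complex.conj_conj]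
      ring
    have hvmem : v ∈ D.domain := hmem v ⟨_, hw⟩
    have hDv : D ⟨v, hvmem⟩ = -(starRingEnd ℂ) c • v := happ v hvmem _ hw
    -- now use symmetry to get v = 0
    have h3 := hsym ⟨v, hvmem⟩ ⟨v, hvmem⟩
    rw [hDv] at h3
    rw [inner_smul_left, inner_smul_right] at h3
    simp only [map_neg, Complex.conj_conj, hc1, neg_neg] at h3
    -- h3 : -c * ⟪v,v⟫ = c * ⟪v,v⟫
    have h4 : (2 * c) * ⟪(v : H), v⟫ = 0 := by linear_combination -h3
    have h5 : ⟪(v : H), v⟫ = (0 : ℂ) := by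
      rcases mul_eq_zero.mp h4 with h | h
      · exact absurd h (by simpa using hc2)
      · exact h
    exact inner_self_eq_zero.mp h5
  -- surjectivity
  have hsurj : Function.Surjective T := by
    rw [← LinearMap.range_eq_top]
    haveI hcs : CompleteSpace (LinearMap.range T : Submodule ℂ H) :=
      IsClosed.completeSpace_coe (hs := hclosedrange)
    rw [← Submodule.orthogonal_eq_bot_iff]
    exact horth
  -- build the continuous inverse
  let E := LinearEquiv.ofBijective T ⟨hinj, hsurj⟩
  let R₀ : H →ₗ[ℂ] H := D.domain.subtype ∘ₗ (E.symm : H →ₗ[ℂ] D.domain)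
  have hR₀ : ∀ u, ‖R₀ u‖ ≤ 1 * ‖u‖ := by
    intro u
    have h1 : T (E.symm u) = u := E.apply_symm_apply u
    calc ‖R₀ u‖ = ‖((E.symm u : D.domain) : H)‖ := rfl
      _ ≤ ‖T (E.symm u)‖ := hnorm1 _
      _ = 1 * ‖u‖ := by rw [h1, one_mul]
  refine ⟨R₀.mkContinuous 1 hR₀, ?_, ?_⟩
  · intro u
    refine ⟨E.symm u, rfl, ?_⟩
    have h1 : T (E.symm u) = u := E.apply_symm_apply u
    rw [← hTapp]
    exact h1
  · intro a
    show R₀ (D a + c • (a : H)) = (a : H)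
    have : D a + c • (a : H) = T a := rfl
    rw [this]
    show ((E.symm (T a) : D.domain) : H) = (a : H)
    congr 1
    exact E.symm_apply_apply a

lemma aux_pascal {M : Type*} [AddCommGroup M] [Module ℂ M] (N : ℕ) (g : ℕ → M)
    (hg : g (N + 1) = 0) (m : ℕ) :
    ∑ k ∈ Finset.range (N + 1), (((m+1).choose k : ℂ)) • g k
      = ∑ k ∈ Finset.range (N + 1), ((m.choose k : ℂ)) • g k
        + ∑ k ∈ Finset.range (N + 1), ((m.choose k : ℂ)) • g (k + 1) := by
  rw [Finset.sum_range_succ' (fun k => (((m+1).choose k : ℂ)) • g k) N]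
  rw [Finset.sum_range_succ' (fun k => ((m.choose k : ℂ)) • g k) N]
  rw [Finset.sum_range_succ (fun k => ((m.choose k : ℂ)) • g (k + 1)) N]
  simp only [Nat.choose_succ_succ, Nat.choose_zero_right, Nat.cast_add, add_smul, Nat.cast_one,
    one_smul, hg, smul_zero, add_zero]
  rw [Finset.sum_add_distrib]
  abel

/-- **Kernel stabilization** (Theorem 3.5 of the paper). Let `D` be a densely defined
self-adjoint operator on a complex Hilbert space `H`, let `n ≥ 1`, and let `x` be an
`n`-times weakly `D`-differentiable bounded operator with iterated weak derivatives
`y k = (δ^D_w)^k(x)` (so `y 0 = x`, each `y k` (`k < n`) preserves `dom D`, and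
`y (k+1) h = i • (D (y k h) - y k (D h))` for `h ∈ dom D`).  If `(δ^D_w)^n(x) = 0`
then `δ^D_w(x) = 0`; that is, `ker (δ^D_w)^n = ker δ^D_w`. -/
theorem kernel_stabilization {H : Type*} [NormedAddCommGroup H] [InnerProductSpace ℂ H]
    [CompleteSpace H] (D : H →ₗ.[ℂ] H) (hdense : Dense (D.domain : Set H))
    (hsa : D.adjoint = D) (n : ℕ) (hn : 1 ≤ n) (x : H →L[ℂ] H) (y : ℕ → H →L[ℂ] H)
    (hy0 : y 0 = x)
    (hmap : ∀ k, k < n → ∀ h : D.domain, y k h ∈ D.domain)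
    (hder : ∀ k (hk : k < n) (h : D.domain),
      y (k + 1) (h : H) = Complex.I • (D ⟨y k h, hmap k hk h⟩ - y k (D h)))
    (hker : y n = 0) :
    y 1 = 0 := by
  obtain ⟨N, rfl⟩ : ∃ N, n = N + 1 := ⟨n - 1, by omega⟩
  rcases Nat.eq_zero_or_pos N with hN0 | hN1
  · subst hN0; exact hker
  -- the two resolvents
  obtain ⟨R, hR, hRl⟩ := aux_resolvent D hdense hsa Complex.I
    (by simp) Complex.I_ne_zero (by simp)
  obtain ⟨R', hR', hR'l⟩ := aux_resolvent D hdense hsa (-Complex.I)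
    (by simp) (by simp [Complex.I_ne_zero]) (by simp)
  have hsym : ∀ a b : D.domain, ⟪D a, (b : H)⟫ = ⟪(a : H), D b⟫ := by
    have h := D.adjoint_isFormalAdjoint hdense
    rw [hsa] at h
    exact h
  -- adjoint pairing between R and R'
  have hRadj : ∀ u w : H, ⟪R u, w⟫ = ⟪u, R' w⟫ := by
    intro u w
    obtain ⟨a, ha1, ha2⟩ := hR u
    obtain ⟨b, hb1, hb2⟩ := hR' w
    rw [← ha1, ← hb1, ← ha2, ← hb2]
    rw [inner_add_right, inner_add_left, inner_smul_right, inner_smul_left, hsym a b]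
    simp only [map_neg, Complex.conj_I]
    try ring
  -- resolvent identities
  have hres1 : ∀ u, R' u = R u + (2 * Complex.I) • R' (R u) := by
    intro u
    obtain ⟨a, ha1, ha2⟩ := hR u
    have h3 := hR'l a
    have h5 : D a + Complex.I • (a : H)
        = (D a + (-Complex.I) • (a : H)) + (2 * Complex.I) • (a : H) := by
      rw [add_assoc, ← add_smul]; congr 1; ring
    have h6 : R' u = R' (D a + (-Complex.I) • (a : H)) + (2 * Complex.I) • R' ((a : H)) := by
      rw [← map_smul, ← map_add, ← h5, ha2]
    rw [h6, h3, ha1]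
  have hres2 : ∀ u, R u = R' u + (-(2 * Complex.I)) • R (R' u) := by
    intro u
    obtain ⟨b, hb1, hb2⟩ := hR' u
    have h3 := hRl b
    have h5 : D b + (-Complex.I) • (b : H)
        = (D b + Complex.I • (b : H)) + (-(2 * Complex.I)) • (b : H) := by
      rw [add_assoc, ← add_smul]; congr 1; ring
    have h6 : R u = R (D b + Complex.I • (b : H)) + (-(2 * Complex.I)) • R ((b : H)) := by
      rw [← map_smul, ← map_add, ← h5, hb2]
    rw [h6, h3, hb1]
  -- Cayley unitaries
  set V : H →L[ℂ] H := (2 * Complex.I) • R - 1 with hVdef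
  set W : H →L[ℂ] H := (-(2 * Complex.I)) • R' - 1 with hWdef
  have hVapp : ∀ u, V u = (2 * Complex.I) • R u - u := by
    intro u
    rw [hVdef, ContinuousLinearMap.sub_apply, ContinuousLinearMap.smul_apply,
      ContinuousLinearMap.one_apply]
  have hWapp : ∀ u, W u = (-(2 * Complex.I)) • R' u - u := by
    intro u
    rw [hWdef, ContinuousLinearMap.sub_apply, ContinuousLinearMap.smul_apply,
      ContinuousLinearMap.one_apply]
  have hWV : W * V = 1 := by
    ext u
    rw [ContinuousLinearMap.mul_apply, hWapp, hVapp, map_sub, map_smul,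
      ContinuousLinearMap.one_apply]
    rw [hres1 u]
    module
  have hVW : V * W = 1 := by
    ext u
    rw [ContinuousLinearMap.mul_apply, hVapp, hWapp, map_sub, map_smul,
      ContinuousLinearMap.one_apply]
    rw [hres2 u]
    module
  -- pairing and isometry
  have hpair2 : ∀ u w : H, ⟪W u, w⟫ = ⟪u, V w⟫ := by
    intro u w
    have h1 : ⟪R' u, w⟫ = ⟪u, R w⟫ := by
      rw [← inner_conj_symm (R' u) w, ← hRadj w u, inner_conj_symm]
    rw [hWapp, hVapp, inner_sub_left, inner_sub_right, inner_smul_left, inner_smul_right, h1]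
    have h2 : (starRingEnd ℂ) (2 : ℂ) = 2 := map_ofNat _ 2
    simp only [map_neg, map_mul, Complex.conj_I, h2]
    ring
  have hWiso : ∀ u : H, ‖W u‖ = ‖u‖ := by
    intro u
    have h2 : V (W u) = u := by
      rw [← ContinuousLinearMap.mul_apply, hVW, ContinuousLinearMap.one_apply]
    have h1 : ⟪W u, W u⟫ = ⟪u, u⟫ := by rw [hpair2, h2]
    rw [inner_self_eq_norm_sq_to_K, inner_self_eq_norm_sq_to_K] at h1
    have h3 : ‖W u‖ ^ 2 = ‖u‖ ^ 2 := by exact_mod_cast h1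
    calc ‖W u‖ = Real.sqrt (‖W u‖ ^ 2) := (Real.sqrt_sq (norm_nonneg _)).symm
      _ = Real.sqrt (‖u‖ ^ 2) := by rw [h3]
      _ = ‖u‖ := Real.sqrt_sq (norm_nonneg _)
  have hWpow : ∀ (m : ℕ) (u : H), ‖(W ^ m) u‖ = ‖u‖ := by
    intro m
    induction m with
    | zero => intro u; simp
    | succ m ih =>
      intro u
      have : (W ^ (m + 1)) u = (W ^ m) (W u) := by
        rw [pow_succ, ContinuousLinearMap.mul_apply]
      rw [this, ih, hWiso]
  have hpairpow : ∀ (m : ℕ) (u z : H), ⟪u, (V ^ m) z⟫ = ⟪(W ^ m) u, z⟫ := by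
    intro m
    induction m with
    | zero => intro u z; simp
    | succ m ih =>
      intro u z
      have h1 : (V ^ (m + 1)) z = (V ^ m) (V z) := by
        rw [pow_succ, ContinuousLinearMap.mul_apply]
      have h2 : (W ^ (m + 1)) u = W ((W ^ m) u) := by
        rw [pow_succ', ContinuousLinearMap.mul_apply]
      rw [h1, ih, h2, hpair2]
  -- commutation of R with powers of R
  have hBR : ∀ (k : ℕ) (v : H), R ((R ^ k) v) = (R ^ k) (R v) := by
    intro k v
    rw [← ContinuousLinearMap.mul_apply, ← ContinuousLinearMap.mul_apply,
      ← pow_succ', ← pow_succ]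
  -- the basic commutator relation
  have hcomm : ∀ j, j < N + 1 → ∀ u : H,
      R (y j u) - y j (R u) = Complex.I • R (y (j + 1) (R u)) := by
    intro j hj u
    obtain ⟨a, ha1, ha2⟩ := hR u
    have hmem' : y j (a : H) ∈ D.domain := hmap j hj a
    have hd := hder j hj a
    -- left inverse applied to the element ⟨y j a, _⟩
    have h3 := hRl ⟨y j (a : H), hmem'⟩
    -- y j (R u) = R (D ⟨y j a,_⟩ + I • y j a)
    have h4 : y j (R u) = R (D ⟨y j (a : H), hmem'⟩ + Complex.I • y j (a : H)) := by
      rw [← ha1]; exact h3.symm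
    have h5 : R (y j u) = R (y j (D a) + Complex.I • y j (a : H)) := by
      rw [← ha2, map_add, map_smul]
    rw [h4, h5, ← map_sub]
    have h6 : y j (D a) + Complex.I • y j (a : H)
        - (D ⟨y j (a : H), hmem'⟩ + Complex.I • y j (a : H))
        = y j (D a) - D ⟨y j (a : H), hmem'⟩ := by module
    rw [h6]
    have h7 : y j (D a) - D ⟨y j (a : H), hmem'⟩ = Complex.I • y (j + 1) (a : H) := by
      rw [hd, smul_smul, Complex.I_mul_I]
      module
    rw [h7, map_smul, ha1]
  -- iterated commutators
  set A : ℕ → (H →L[ℂ] H) := fun k => ((-2 : ℂ) ^ k) • ((R ^ k) * y k * (R ^ k)) with hAdef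
  have hAapp : ∀ (k : ℕ) (z : H), A k z = ((-2 : ℂ) ^ k) • (R ^ k) (y k ((R ^ k) z)) := by
    intro k z
    rw [hAdef]
    simp only [ContinuousLinearMap.smul_apply, ContinuousLinearMap.mul_apply]
  have hA : ∀ k, k < N + 1 → ∀ u : H, V (A k u) = A k (V u) + A (k + 1) u := by
    intro k hk u
    have e1 : V (A k u) = (2 * Complex.I) • R (A k u) - A k u := hVapp _
    have e2 : A k (V u) = (2 * Complex.I) • A k (R u) - A k u := by
      rw [hVapp, map_sub, map_smul]
    have e3 : R (A k u) = ((-2 : ℂ) ^ k) • (R ^ k) (R (y k ((R ^ k) u))) := by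
      rw [hAapp, map_smul, hBR k]
    have e4 : A k (R u) = ((-2 : ℂ) ^ k) • (R ^ k) (y k (R ((R ^ k) u))) := by
      rw [hAapp, hBR k]
    have e5 : R (y k ((R ^ k) u)) = y k (R ((R ^ k) u))
        + Complex.I • R (y (k + 1) (R ((R ^ k) u))) := by
      have := hcomm k hk ((R ^ k) u)
      linear_combination (norm := module) this
    have e6 : A (k + 1) u = ((-2 : ℂ) ^ (k + 1)) • (R ^ k) (R (y (k + 1) (R ((R ^ k) u)))) := by
      rw [hAapp]
      congr 1
      have h8 : ((R ^ (k+1))) u = R ((R ^ k) u) := by rw [pow_succ', ContinuousLinearMap.mul_apply]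
      have h9 : ∀ w : H, (R ^ (k+1)) w = (R ^ k) (R w) := by
        intro w; rw [pow_succ, ContinuousLinearMap.mul_apply]
      rw [h8, h9]
    rw [e1, e2, e3, e4, e5, e6, map_add, map_smul]
    have : ((-2 : ℂ) ^ (k + 1)) = (2 * Complex.I) * (-2 : ℂ)^k * Complex.I := by
      rw [pow_succ]
      have : Complex.I * Complex.I = -1 := Complex.I_mul_I
      ring_nf
      rw [Complex.I_sq]
      ring
    rw [this]
    module
  -- the sequence g and its properties
  set g : ℕ → (H →L[ℂ] H) := fun k => A k * (W ^ k) with hgdef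
  have hgN : g (N + 1) = 0 := by
    rw [hgdef]
    simp only
    rw [hAdef]
    simp only [hker]
    simp
  have hterm : ∀ k, k < N + 1 → V * g k * W = g k + g (k + 1) := by
    intro k hk
    ext u
    have hz : V ((W ^ k) (W u)) = (W ^ k) u := by
      have h1 : V * (W ^ k * W) = W ^ k := by
        rw [← pow_succ, pow_succ', ← mul_assoc, hVW, one_mul]
      calc V ((W ^ k) (W u)) = (V * (W ^ k * W)) u := by
            rw [ContinuousLinearMap.mul_apply, ContinuousLinearMap.mul_apply]
        _ = (W ^ k) u := by rw [h1]
    have lhs : (V * g k * W) u = V (A k ((W ^ k) (W u))) := by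
      rw [hgdef]
      simp only [ContinuousLinearMap.mul_apply]
    have rhs1 : g k u + g (k + 1) u
        = A k ((W ^ k) u) + A (k + 1) ((W ^ k) (W u)) := by
      have hww : (W ^ (k + 1)) u = (W ^ k) (W u) := by
        rw [pow_succ, ContinuousLinearMap.mul_apply]
      rw [hgdef]
      simp only [ContinuousLinearMap.mul_apply]
      rw [hww]
    rw [ContinuousLinearMap.add_apply, lhs, rhs1, hA k hk, hz]
  have hΦ : ∀ m : ℕ, (V ^ m) * x * (W ^ m)
      = ∑ k ∈ Finset.range (N + 1), ((m.choose k : ℂ)) • g k := by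
    intro m
    induction m with
    | zero =>
      rw [Finset.sum_range_succ' (fun k => (((0 : ℕ).choose k : ℂ)) • g k) N]
      simp only [Nat.choose_zero_succ, Nat.cast_zero, zero_smul, Finset.sum_const_zero,
        Nat.choose_self, Nat.cast_one, one_smul, zero_add, pow_zero, one_mul, mul_one]
      rw [hgdef]
      simp only [pow_zero, mul_one]
      rw [hAdef]
      simp only [pow_zero, one_smul, one_mul, mul_one, hy0]
    | succ m ih =>
      have h1 : V ^ (m + 1) * x * W ^ (m + 1) = V * (V ^ m * x * W ^ m) * W := by
        rw [pow_succ' V, pow_succ W]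
        noncomm_ring
      rw [h1, ih, Finset.mul_sum, Finset.sum_mul]
      have h2 : ∀ k ∈ Finset.range (N + 1),
          (V * ((m.choose k : ℂ) • g k)) * W = (m.choose k : ℂ) • (g k + g (k + 1)) := by
        intro k hk
        rw [mul_smul_comm, smul_mul_assoc, hterm k (Finset.mem_range.mp hk)]
      rw [Finset.sum_congr rfl h2]
      simp only [smul_add]
      rw [Finset.sum_add_distrib]
      exact (aux_pascal N g hgN m).symm
  -- the uniform bound
  have hbound : ∀ (m : ℕ) (u v : H),
      ‖∑ k ∈ Finset.range (N + 1), ((m.choose k : ℕ)) • ⟪u, g k v⟫‖ ≤ ‖x‖ * ‖u‖ * ‖v‖ := by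
    intro m u v
    have h1 : ∑ k ∈ Finset.range (N + 1), ((m.choose k : ℕ)) • ⟪u, g k v⟫
        = ⟪u, ((V ^ m) * x * (W ^ m)) v⟫ := by
      rw [hΦ m]
      rw [ContinuousLinearMap.sum_apply, inner_sum]
      congr 1
      funext k
      rw [ContinuousLinearMap.smul_apply, inner_smul_right, nsmul_eq_mul]
    rw [h1]
    have h2 : ((V ^ m) * x * (W ^ m)) v = (V ^ m) (x ((W ^ m) v)) := by
      simp only [ContinuousLinearMap.mul_apply]
    rw [h2, hpairpow]
    calc ‖⟪(W ^ m) u, x ((W ^ m) v)⟫‖ ≤ ‖(W ^ m) u‖ * ‖x ((W ^ m) v)‖ :=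
          norm_inner_le_norm _ _
      _ ≤ ‖(W ^ m) u‖ * (‖x‖ * ‖(W ^ m) v‖) := by
          apply mul_le_mul_of_nonneg_left (x.le_opNorm _) (norm_nonneg _)
      _ = ‖x‖ * ‖u‖ * ‖v‖ := by rw [hWpow, hWpow]; ring
  -- extract that g 1 = 0
  have hg1 : ∀ v : H, g 1 v = 0 := by
    intro v
    have h1 := aux_binom_bound N (fun k => ⟪g 1 v, g k v⟫) (‖x‖ * ‖g 1 v‖ * ‖v‖)
      (fun m => hbound m (g 1 v) v) 1 le_rfl hN1
    exact inner_self_eq_zero.mp h1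
  -- hence A 1 = 0
  have hA1 : ∀ v : H, A 1 v = 0 := by
    intro v
    have hwv : W (V v) = v := by
      rw [← ContinuousLinearMap.mul_apply, hWV, ContinuousLinearMap.one_apply]
    have h2 : (g 1) (V v) = A 1 v := by
      rw [hgdef]
      simp only [ContinuousLinearMap.mul_apply, pow_one]
      rw [hwv]
    rw [← h2, hg1]
  -- hence R * y 1 * R = 0
  have hRinj : ∀ w : H, R w = 0 → w = 0 := by
    intro w hw
    obtain ⟨a, ha1, ha2⟩ := hR w
    have ha0 : (a : H) = 0 := by rw [ha1, hw]
    have ha0' : a = 0 := Subtype.ext ha0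
    rw [← ha2, ha0']
    simp only [ZeroMemClass.coe_zero, smul_zero, add_zero]
    exact D.map_zero
  have hy1R : ∀ v : H, y 1 (R v) = 0 := by
    intro v
    have h1 := hA1 v
    rw [hAapp] at h1
    simp only [pow_one, ContinuousLinearMap.mul_apply] at h1
    have h2 : R (y 1 (R v)) = 0 := by
      have h3 : ((-2 : ℂ)) • R (y 1 (R v)) = 0 := by
        simpa using h1
      have := smul_eq_zero.mp h3
      rcases this with h | h
      · norm_num at h
      · exact h
    exact hRinj _ h2
  -- conclude by density
  have heq : Set.EqOn (⇑(y 1)) (⇑(0 : H →L[ℂ] H)) (D.domain : Set H) := by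
    intro h hh
    have h1 := hRl ⟨h, hh⟩
    show y 1 h = 0
    calc y 1 h = y 1 (R (D ⟨h, hh⟩ + Complex.I • h)) := by rw [h1]
      _ = 0 := hy1R _
  have hs : Dense ((Submodule.span ℂ (D.domain : Set H) : Submodule ℂ H) : Set H) := by
    rwa [Submodule.span_eq]
  exact ContinuousLinearMap.ext_on hs heq
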